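/- arXiv:2601.05959 — 5 statements merged into one kernel-verified Lean document; each statement's English description precedes it below -/
import Mathlib

section
/- Let N ≥ 3, 2* = 2N/(N−2), and γ > 1. Suppose G : ℝ → ℝ satisfies the self-similarity relation G(s) = γ^{−Nj} G(γ^{((N−2)/2) j} s) for all j ∈ ℤ and s ∈ ℝ, and G is continuous. Then there exists a constant C > 0 such that |G(s)| ≤ C |s|^{2*} for all s ∈ ℝ. -/
open Real

theorem stmt_2 (N : ℕ) (hN : 3 ≤ N) (γ : ℝ) (hγ : 1 < γ) (G : ℝ → ℝ)
    (hGc : Continuous G)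
    (hss : ∀ (j : ℤ) (s : ℝ),
      G s = γ ^ (-(N : ℝ) * (j : ℝ)) * G (γ ^ (((N : ℝ) - 2) / 2 * (j : ℝ)) * s)) :
    ∃ C > 0, ∀ s : ℝ, |G s| ≤ C * |s| ^ (2 * (N : ℝ) / ((N : ℝ) - 2)) := by
  have hγ0 : (0:ℝ) < γ := lt_trans one_pos hγ
  have hN2 : (2:ℝ) < (N:ℝ) := by exact_mod_cast lt_of_lt_of_le (by norm_num) hN
  set α : ℝ := ((N:ℝ) - 2) / 2 with hαdef
  set p : ℝ := 2 * (N:ℝ) / ((N:ℝ) - 2) with hpdef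
  have hα : 0 < α := by rw [hαdef]; linarith
  have hsub : (N:ℝ) - 2 ≠ 0 := by linarith
  have hp : 0 < p := by
    rw [hpdef]; apply div_pos <;> linarith
  have hNαp : α * p = (N:ℝ) := by
    rw [hαdef, hpdef]; field_simp
  have hL : 0 < Real.log γ := Real.log_pos hγ
  -- bound on compact set
  have hK : (0:ℝ) ∈ Set.Icc (-(γ ^ α)) (γ ^ α) := by
    constructor <;> [linarith [Real.rpow_pos_of_pos hγ0 α]; linarith [Real.rpow_pos_of_pos hγ0 α]]
  obtain ⟨x0, hx0mem, hx0⟩ := (isCompact_Icc (a := -(γ ^ α)) (b := γ ^ α)).exists_isMaxOn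
    ⟨0, hK⟩ (hGc.abs.continuousOn)
  refine ⟨|G x0| + 1, by positivity, ?_⟩
  intro s
  rcases eq_or_ne s 0 with rfl | hs
  · have h0 := hss 1 0
    simp only [mul_zero, Int.cast_one, mul_one] at h0
    have hlt : γ ^ (-(N:ℝ)) < 1 := by
      apply Real.rpow_lt_one_of_one_lt_of_neg hγ
      linarith
    have hG0 : G 0 = 0 := by
      have h1 : G 0 * (1 - γ ^ (-(N:ℝ))) = 0 := by
        rw [mul_sub, mul_one]; linarith [h0]
      rcases mul_eq_zero.mp h1 with h | h
      · exact h
      · linarith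
    rw [hG0]
    have : |(0:ℝ)| ^ p = 0 := by
      rw [abs_zero, Real.zero_rpow (ne_of_gt hp)]
    rw [this, abs_zero, mul_zero]
  · have hs0 : 0 < |s| := abs_pos.mpr hs
    set j : ℤ := ⌈(-Real.log |s|) / (α * Real.log γ)⌉ with hjdef
    have hαL : 0 < α * Real.log γ := mul_pos hα hL
    have hj1 : (-Real.log |s|) / (α * Real.log γ) ≤ (j:ℝ) := Int.le_ceil _
    have hj2 : (j:ℝ) < (-Real.log |s|) / (α * Real.log γ) + 1 := Int.ceil_lt_add_one _
    -- define u
    have hexp : γ ^ (α * (j:ℝ)) = Real.exp (α * (j:ℝ) * Real.log γ) := by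
      rw [Real.rpow_def_of_pos hγ0]; ring_nf
    have habs : |s| = Real.exp (Real.log |s|) := (Real.exp_log hs0).symm
    have key1 : (1:ℝ) ≤ γ ^ (α * (j:ℝ)) * |s| := by
      rw [hexp, habs, ← Real.exp_add]
      rw [← Real.exp_zero]
      apply Real.exp_le_exp.mpr
      have := (div_le_iff₀ hαL).mp hj1
      nlinarith
    have key2 : γ ^ (α * (j:ℝ)) * |s| ≤ γ ^ α := by
      have : γ ^ α = Real.exp (α * Real.log γ) := by
        rw [Real.rpow_def_of_pos hγ0]; ring_nf
      rw [hexp, habs, ← Real.exp_add, this]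
      apply Real.exp_le_exp.mpr
      have := (lt_div_iff₀ hαL).mp (by linarith : (j:ℝ) - 1 < (-Real.log |s|) / (α * Real.log γ))
      nlinarith
    have hGs := hss j s
    have hpow_pos : (0:ℝ) < γ ^ (-(N:ℝ) * (j:ℝ)) := Real.rpow_pos_of_pos hγ0 _
    set u : ℝ := γ ^ (α * (j:ℝ)) * s with hudef
    have huabs : |u| = γ ^ (α * (j:ℝ)) * |s| := by
      rw [hudef, abs_mul, abs_of_pos (Real.rpow_pos_of_pos hγ0 _)]
    have humem : u ∈ Set.Icc (-(γ ^ α)) (γ ^ α) := by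
      rw [Set.mem_Icc, ← abs_le, huabs]; exact key2
    have hGu : |G u| ≤ |G x0| := hx0 humem
    have hGseq : |G s| = γ ^ (-(N:ℝ) * (j:ℝ)) * |G u| := by
      rw [hGs, abs_mul, abs_of_pos hpow_pos]
    -- γ^(-N j) ≤ |s|^p
    have hfac : γ ^ (-(N:ℝ) * (j:ℝ)) ≤ |s| ^ p := by
      have h1 : γ ^ (-(N:ℝ) * (j:ℝ)) = (γ ^ (α * (j:ℝ))) ^ (-p) := by
        rw [← Real.rpow_mul hγ0.le]
        congr 1
        rw [← hNαp]; ring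
      have hinv : |s|⁻¹ ≤ γ ^ (α * (j:ℝ)) := by
        rw [inv_le_iff_one_le_mul₀' hs0]
        linarith [key1]
      have h2 : (γ ^ (α * (j:ℝ))) ^ (-p) ≤ (|s|⁻¹) ^ (-p) := by
        apply Real.rpow_le_rpow_of_nonpos (inv_pos.mpr hs0) hinv (by linarith)
      have h3 : (|s|⁻¹ : ℝ) ^ (-p) = |s| ^ p := by
        rw [← Real.rpow_neg_one |s|, ← Real.rpow_mul hs0.le]
        norm_num
      rw [h1]
      calc (γ ^ (α * (j:ℝ))) ^ (-p) ≤ (|s|⁻¹) ^ (-p) := h2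
        _ = |s| ^ p := h3
    calc |G s| = γ ^ (-(N:ℝ) * (j:ℝ)) * |G u| := hGseq
      _ ≤ |s| ^ p * |G x0| := by
          apply mul_le_mul hfac hGu (abs_nonneg _) (Real.rpow_nonneg (abs_nonneg _) _)
      _ ≤ (|G x0| + 1) * |s| ^ p := by
          rw [mul_comm]
          have := Real.rpow_nonneg (abs_nonneg s) p
          nlinarith
end

section
/- Let N ≥ 3, 2* = 2N/(N−2), γ > 1 and let G : ℝ → ℝ be a continuous self-similar function, i.e. G(s) = γ^{−Nj} G(γ^{((N−2)/2) j} s) for all j ∈ ℤ, s ∈ ℝ, which is locally Lipschitz. Then there exists C > 0 such that for all a₁, a₂ ∈ ℝ: |G(a₁ + a₂) − G(a₁) − G(a₂)| ≤ C ( |a₁| |a₂|^{2*−1} + |a₁|^{2*−1} |a₂| ). -/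
open Real Set Metric

lemma myLipOnCompact {f : ℝ → ℝ} (hf : LocallyLipschitz f) {s : Set ℝ} (hs : IsCompact s) :
    ∃ K : ℝ, 0 ≤ K ∧ ∀ x ∈ s, ∀ y ∈ s, |f x - f y| ≤ K * |x - y| := by
  have hfc : Continuous f := hf.continuous
  choose Kl t ht hK using hf
  have hr : ∀ x : ℝ, ∃ r > 0, ball x r ⊆ t x := fun x => Metric.mem_nhds_iff.mp (ht x)
  choose r hr0 hrt using hr
  obtain ⟨T, hT⟩ := hs.elim_finite_subcover (fun x : ℝ => ball x (r x))
    (fun x => isOpen_ball) (fun y hy => mem_iUnion.mpr ⟨y, mem_ball_self (hr0 y)⟩)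
  obtain ⟨δ, hδ0, hδ⟩ := lebesgue_number_lemma_of_metric (ι := ↥T) hs
    (fun i => isOpen_ball (x := (i : ℝ)) (ε := r i)) (by
      intro y hy
      obtain ⟨i, hi, hyi⟩ := mem_iUnion₂.mp (hT hy)
      exact mem_iUnion.mpr ⟨⟨i, hi⟩, hyi⟩)
  obtain ⟨C, hC⟩ := hs.exists_bound_of_continuousOn hfc.continuousOn
  set K₀ : ℝ := ((T.sup Kl : NNReal) : ℝ)
  set K : ℝ := max K₀ (2 * max C 0 / δ)
  refine ⟨K, le_trans (by positivity) (le_max_left _ _), ?_⟩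
  intro x hx y hy
  rcases lt_or_ge (dist x y) δ with h | h
  · obtain ⟨i, hi⟩ := hδ x hx
    have hxi : x ∈ t i := hrt _ (hi (mem_ball_self hδ0))
    have hyi : y ∈ t i := hrt _ (hi (by simpa [mem_ball, dist_comm] using h))
    have := (hK (i : ℝ)).dist_le_mul x hxi y hyi
    have hKle : (Kl (i : ℝ) : ℝ) ≤ K₀ := by
      exact_mod_cast Finset.le_sup (f := Kl) i.2
    calc |f x - f y| = dist (f x) (f y) := (Real.dist_eq _ _).symm
      _ ≤ Kl (i : ℝ) * dist x y := this
      _ ≤ K * |x - y| := by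
          rw [Real.dist_eq] at *
          exact mul_le_mul (le_trans hKle (le_max_left _ _)) le_rfl (abs_nonneg _)
            (le_trans (by positivity) (le_max_left _ _))
  · have h1 : |f x| ≤ max C 0 := le_trans (hC x hx) (le_max_left _ _)
    have h2 : |f y| ≤ max C 0 := le_trans (hC y hy) (le_max_left _ _)
    have hxy : δ ≤ |x - y| := by rwa [Real.dist_eq] at h
    calc |f x - f y| ≤ |f x| + |f y| := abs_sub _ _
      _ ≤ 2 * max C 0 := by linarith
      _ = (2 * max C 0 / δ) * δ := by field_simp
      _ ≤ (2 * max C 0 / δ) * |x - y| := by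
          apply mul_le_mul_of_nonneg_left hxy; positivity
      _ ≤ K * |x - y| := mul_le_mul_of_nonneg_right (le_max_right _ _) (abs_nonneg _)

theorem stmt_4 (N : ℕ) (hN : 3 ≤ N) (γ : ℝ) (hγ : 1 < γ) (G : ℝ → ℝ)
    (hGc : Continuous G) (hlip : LocallyLipschitz G)
    (hss : ∀ (j : ℤ) (s : ℝ),
      G s = γ ^ (-(N : ℝ) * (j : ℝ)) * G (γ ^ (((N : ℝ) - 2) / 2 * (j : ℝ)) * s)) :
    ∃ C > 0, ∀ a₁ a₂ : ℝ,
      |G (a₁ + a₂) - G a₁ - G a₂| ≤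
        C * (|a₁| * |a₂| ^ (2 * (N : ℝ) / ((N : ℝ) - 2) - 1) +
          |a₁| ^ (2 * (N : ℝ) / ((N : ℝ) - 2) - 1) * |a₂|) := by
  set n : ℝ := (N : ℝ) with hn
  have hn3 : (3:ℝ) ≤ n := by rw [hn]; exact_mod_cast hN
  have hn2 : (0:ℝ) < n - 2 := by linarith
  set e : ℝ := (n - 2) / 2 with he
  have he0 : 0 < e := by positivity
  set p : ℝ := 2 * n / (n - 2) with hp
  have hp1 : 1 < p := by rw [hp, lt_div_iff₀ hn2]; linarith
  have hp0' : 0 < p - 1 := by linarith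
  have hγ0 : 0 < γ := lt_trans one_pos hγ
  set Λ : ℝ := γ ^ e with hΛ
  have hΛ1 : 1 < Λ := Real.one_lt_rpow_iff_of_pos hγ0 |>.mpr (Or.inl ⟨hγ, he0⟩)
  have hΛ0 : 0 < Λ := lt_trans one_pos hΛ1
  obtain ⟨K, hK0, hK⟩ := myLipOnCompact hlip (isCompact_Icc (a := -Λ) (b := Λ))
  -- G 0 = 0
  have hG0 : G 0 = 0 := by
    have h := hss 1 0
    rw [mul_zero] at h
    have hq : γ ^ (-n * ((1:ℤ):ℝ)) < 1 := by
      apply Real.rpow_lt_one_of_one_lt_of_neg hγ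
      push_cast; nlinarith
    have hqpos : 0 < γ ^ (-n * ((1:ℤ):ℝ)) := Real.rpow_pos_of_pos hγ0 _
    have h2 : G 0 * (1 - γ ^ (-n * ((1:ℤ):ℝ))) = 0 := by push_cast at h ⊢; linarith [h]
    rcases mul_eq_zero.mp h2 with h3 | h3
    · exact h3
    · exfalso; nlinarith
  -- key scaling estimate
  have key : ∀ M : ℝ, 0 < M → ∀ x y : ℝ, |x| ≤ M → |y| ≤ M →
      |G x - G y| ≤ K * M ^ (p - 1) * |x - y| := by
    intro M hM x y hx hy
    obtain ⟨j, hjl, hju⟩ := exists_mem_Ico_zpow hM hΛ1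
    set c : ℝ := γ ^ (e * (j:ℝ)) with hc
    have hc0 : 0 < c := Real.rpow_pos_of_pos hγ0 _
    have hczpow : Λ ^ j = c := by
      rw [← Real.rpow_intCast Λ j, hΛ, ← Real.rpow_mul hγ0.le]
    have hcM : c ≤ M := by rw [← hczpow]; exact hjl
    have hMc : M < c * Λ := by
      have : Λ ^ (j + 1) = Λ ^ j * Λ := zpow_add_one₀ (ne_of_gt hΛ0) j
      rw [this, hczpow] at hju; exact hju
    have hGw : ∀ w : ℝ, G w = γ ^ (n * (j:ℝ)) * G (w / c) := by
      intro w
      have h := hss j (w / c)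
      rw [show γ ^ ((n - 2) / 2 * (j:ℝ)) * (w / c) = w by
        rw [show γ ^ ((n - 2) / 2 * (j:ℝ)) = c from rfl]; field_simp] at h
      rw [h, ← mul_assoc, ← Real.rpow_add hγ0,
        show n * (j:ℝ) + -n * (j:ℝ) = 0 by ring, Real.rpow_zero, one_mul]
    have hmemx : x / c ∈ Icc (-Λ) Λ := by
      rw [mem_Icc, ← abs_le, abs_div, abs_of_pos hc0, div_le_iff₀ hc0]
      nlinarith
    have hmemy : y / c ∈ Icc (-Λ) Λ := by
      rw [mem_Icc, ← abs_le, abs_div, abs_of_pos hc0, div_le_iff₀ hc0]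
      nlinarith
    have hexp : n * (j:ℝ) - e * (j:ℝ) = e * (j:ℝ) * (p - 1) := by
      rw [he, hp]; field_simp
    have hdiv : γ ^ (n * (j:ℝ)) / c = c ^ (p - 1) := by
      rw [hc, ← Real.rpow_mul hγ0.le, ← Real.rpow_sub hγ0]
      rw [hexp]
    have hcle : c ^ (p - 1) ≤ M ^ (p - 1) :=
      Real.rpow_le_rpow hc0.le hcM hp0'.le
    have hγj0 : 0 < γ ^ (n * (j:ℝ)) := Real.rpow_pos_of_pos hγ0 _
    calc |G x - G y| = γ ^ (n * (j:ℝ)) * |G (x / c) - G (y / c)| := by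
          rw [hGw x, hGw y, ← mul_sub, abs_mul, abs_of_pos hγj0]
      _ ≤ γ ^ (n * (j:ℝ)) * (K * (|x - y| / c)) := by
          apply mul_le_mul_of_nonneg_left _ hγj0.le
          calc |G (x / c) - G (y / c)| ≤ K * |x / c - y / c| := hK _ hmemx _ hmemy
            _ = K * (|x - y| / c) := by rw [div_sub_div_same, abs_div, abs_of_pos hc0]
      _ = (γ ^ (n * (j:ℝ)) / c) * K * |x - y| := by ring
      _ = c ^ (p - 1) * K * |x - y| := by rw [hdiv]
      _ ≤ M ^ (p - 1) * K * |x - y| :=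
          mul_le_mul_of_nonneg_right (mul_le_mul_of_nonneg_right hcle hK0) (abs_nonneg _)
      _ = K * M ^ (p - 1) * |x - y| := by ring
  set C : ℝ := K * 2 ^ p + 1 with hC
  have hCpos : 0 < C :=
    add_pos_of_nonneg_of_pos (mul_nonneg hK0 (Real.rpow_pos_of_pos two_pos p).le) one_pos
  have main : ∀ a b : ℝ, |b| ≤ |a| →
      |G (a + b) - G a - G b| ≤ C * (|a| ^ (p - 1) * |b|) := by
    intro a b hba
    by_cases ha : a = 0
    · have hb : b = 0 := by
        rw [ha, abs_zero] at hba
        exact abs_eq_zero.mp (le_antisymm hba (abs_nonneg b))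
      simp [ha, hb, hG0, Real.zero_rpow (ne_of_gt hp0')]
    · have ha0 : 0 < |a| := abs_pos.mpr ha
      set M : ℝ := 2 * |a| with hM
      have hM0 : 0 < M := by positivity
      have h1 := key M hM0 (a + b) a (by
        calc |a + b| ≤ |a| + |b| := abs_add_le _ _
          _ ≤ M := by rw [hM]; linarith) (by rw [hM]; linarith [abs_nonneg a])
      have h2 := key M hM0 b 0 (by rw [hM]; linarith) (by rw [abs_zero, hM]; linarith)
      rw [add_sub_cancel_left] at h1
      rw [hG0, sub_zero, sub_zero] at h2
      have hMe : M ^ (p - 1) = 2 ^ (p - 1) * |a| ^ (p - 1) := by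
        rw [hM, Real.mul_rpow (by norm_num) (abs_nonneg a)]
      have h2p : (2:ℝ) * (2:ℝ) ^ (p - 1) = (2:ℝ) ^ p := by
        rw [show p = (p - 1) + 1 by ring, Real.rpow_add two_pos, Real.rpow_one]; ring
      have htri : |G (a + b) - G a - G b| ≤ |G (a + b) - G a| + |G b| := by
        rw [sub_eq_add_neg (G (a + b) - G a)]
        exact le_trans (abs_add_le _ _) (by rw [abs_neg])
      have hterm : (0:ℝ) ≤ |a| ^ (p - 1) * |b| :=
        mul_nonneg (Real.rpow_nonneg (abs_nonneg a) _) (abs_nonneg b)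
      calc |G (a + b) - G a - G b| ≤ |G (a + b) - G a| + |G b| := htri
        _ ≤ K * M ^ (p - 1) * |b| + K * M ^ (p - 1) * |b| := add_le_add h1 h2
        _ = K * (2 * 2 ^ (p - 1)) * (|a| ^ (p - 1) * |b|) := by rw [hMe]; ring
        _ = K * 2 ^ p * (|a| ^ (p - 1) * |b|) := by rw [h2p]
        _ ≤ C * (|a| ^ (p - 1) * |b|) := by
            apply mul_le_mul_of_nonneg_right _ hterm
            rw [hC]; linarith
  refine ⟨C, hCpos, ?_⟩
  intro a₁ a₂
  rcases le_total |a₂| |a₁| with h | h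
  · have hmain := main a₁ a₂ h
    have hterm : (0:ℝ) ≤ |a₁| * |a₂| ^ (p - 1) :=
      mul_nonneg (abs_nonneg _) (Real.rpow_nonneg (abs_nonneg _) _)
    nlinarith [mul_nonneg hCpos.le hterm]
  · have hmain := main a₂ a₁ h
    have hEq : G (a₁ + a₂) - G a₁ - G a₂ = G (a₂ + a₁) - G a₂ - G a₁ := by
      rw [add_comm]; ring
    rw [hEq]
    have hterm : (0:ℝ) ≤ |a₁| ^ (p - 1) * |a₂| :=
      mul_nonneg (Real.rpow_nonneg (abs_nonneg _) _) (abs_nonneg _)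
    nlinarith [mul_nonneg hCpos.le hterm]
end

section
/- Let N ≥ 3, 2* = 2N/(N−2), and let g : ℝ → ℝ be continuous with |g(s)| ≤ a |s|^{2*−1} for some a > 0, and b ∈ L^∞(ℝ^N). Let G(s) = ∫₀^s g. If (u_k), (v_k) are bounded sequences in L^{2*}(ℝ^N) with u_k − v_k → 0 in L^{2*}(ℝ^N), then ∫_{ℝ^N} b(x)(G(u_k) − G(v_k)) dx → 0 as k → ∞. -/
open MeasureTheory Filter ENNReal intervalIntegral

lemma Gdiff_aux (p a : ℝ) (hpm1 : 0 ≤ p - 1) (g : ℝ → ℝ) (hg : Continuous g)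
    (hgrowth : ∀ s : ℝ, |g s| ≤ a * |s| ^ (p - 1)) (ha : 0 ≤ a) (s t : ℝ) :
    |(∫ τ in (0:ℝ)..s, g τ) - ∫ τ in (0:ℝ)..t, g τ| ≤ a * (|s| + |t|) ^ (p-1) * |s - t| := by
  rw [intervalIntegral.integral_interval_sub_left (hg.intervalIntegrable 0 s)
    (hg.intervalIntegrable 0 t)]
  have := intervalIntegral.norm_integral_le_of_norm_le_const
    (C := a * (|s| + |t|) ^ (p-1)) (f := g) (a := t) (b := s) ?_
  · simpa [Real.norm_eq_abs, abs_sub_comm s t] using this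
  · intro x hx
    rw [Set.mem_uIoc] at hx
    have hxb : |x| ≤ |s| + |t| := by
      rcases hx with ⟨h1, h2⟩ | ⟨h1, h2⟩ <;>
      · rw [abs_le]
        constructor <;>
          [ (have := neg_abs_le s; have := neg_abs_le t; have := abs_nonneg s;
             have := abs_nonneg t; linarith);
            (have := le_abs_self s; have := le_abs_self t; have := abs_nonneg s;
             have := abs_nonneg t; linarith) ]
    calc ‖g x‖ ≤ a * |x| ^ (p-1) := hgrowth x
      _ ≤ a * (|s| + |t|) ^ (p-1) := by
          have := Real.rpow_le_rpow (abs_nonneg x) hxb hpm1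
          nlinarith [Real.rpow_nonneg (abs_nonneg x) (p-1)]

theorem stmt_9 (N : ℕ) (hN : 3 ≤ N) (p : ℝ) (hp : p = 2 * (N : ℝ) / ((N : ℝ) - 2))
    (g : ℝ → ℝ) (hg : Continuous g) (a : ℝ) (ha : 0 < a)
    (hgrowth : ∀ s : ℝ, |g s| ≤ a * |s| ^ (p - 1))
    (b : EuclideanSpace ℝ (Fin N) → ℝ) (hbm : Measurable b)
    (Cb : ℝ) (hCb : ∀ x, |b x| ≤ Cb)
    (G : ℝ → ℝ) (hG : ∀ s : ℝ, G s = ∫ t in (0 : ℝ)..s, g t)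
    (u v : ℕ → EuclideanSpace ℝ (Fin N) → ℝ)
    (hum : ∀ k, AEStronglyMeasurable (u k) volume)
    (hvm : ∀ k, AEStronglyMeasurable (v k) volume)
    (C : ℝ≥0∞) (hC : C < ⊤)
    (hub : ∀ k, eLpNorm (u k) (ENNReal.ofReal p) volume ≤ C)
    (hvb : ∀ k, eLpNorm (v k) (ENNReal.ofReal p) volume ≤ C)
    (hconv : Tendsto (fun k => eLpNorm (u k - v k) (ENNReal.ofReal p) volume)
      atTop (nhds 0)) :
    Tendsto (fun k => ∫ x, b x * (G (u k x) - G (v k x))) atTop (nhds 0) := by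
  -- numeric facts
  have hN3 : (3:ℝ) ≤ (N:ℝ) := by exact_mod_cast hN
  have hN2 : (0:ℝ) < (N:ℝ) - 2 := by linarith
  have hp2 : (2:ℝ) ≤ p := by
    rw [hp, le_div_iff₀ hN2]; linarith
  have hp1 : (1:ℝ) < p := by linarith
  have hpm1 : (0:ℝ) ≤ p - 1 := by linarith
  have hp0 : (0:ℝ) < p := by linarith
  set e : ℝ≥0∞ := ENNReal.ofReal p with he
  have he0 : e ≠ 0 := by simp [he, ENNReal.ofReal_eq_zero]; linarith
  have heT : e ≠ ⊤ := ENNReal.ofReal_ne_top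
  have het : e.toReal = p := ENNReal.toReal_ofReal hp0.le
  have he1 : (1:ℝ≥0∞) ≤ e := by
    rw [he, ← ENNReal.ofReal_one]; exact ENNReal.ofReal_le_ofReal hp1.le
  have hCb0 : 0 ≤ Cb := le_trans (abs_nonneg _) (hCb 0)
  set q : ℝ := p / (p - 1) with hq
  have hpq : p.HolderConjugate q := Real.HolderConjugate.conjExponent hp1
  have hpm1' : p - 1 ≠ 0 := by linarith
  have hqp : (p - 1) * q = p := by rw [hq]; field_simp
  have hpq' : p * (1/q) = p - 1 := by
    rw [hq]; field_simp
  -- the main bound, for each k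
  have hA : ∀ k, (∫⁻ x, (‖b x * (G (u k x) - G (v k x))‖₊ : ℝ≥0∞)) ≤
      (ENNReal.ofReal (Cb * a) * (C + C) ^ (p-1)) * eLpNorm (u k - v k) e volume := by
    intro k
    set W : EuclideanSpace ℝ (Fin N) → ℝ := fun x => |u k x| + |v k x| with hW
    set f1 : EuclideanSpace ℝ (Fin N) → ℝ≥0∞ := fun x => ENNReal.ofReal |u k x - v k x| with hf1
    set f2 : EuclideanSpace ℝ (Fin N) → ℝ≥0∞ := fun x => (ENNReal.ofReal (W x)) ^ (p-1) with hf2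
    have hWnn : ∀ x, 0 ≤ W x := fun x => by positivity
    have hf1m : AEMeasurable f1 volume := by
      exact (Measurable.comp_aemeasurable measurable_abs ((hum k).aemeasurable.sub (hvm k).aemeasurable)).ennreal_ofReal
    have hWm : AEMeasurable W volume := (Measurable.comp_aemeasurable measurable_abs (hum k).aemeasurable).add (Measurable.comp_aemeasurable measurable_abs (hvm k).aemeasurable)
    have hf2m : AEMeasurable f2 volume := hWm.ennreal_ofReal.pow_const _
    have step1 : (∫⁻ x, (‖b x * (G (u k x) - G (v k x))‖₊ : ℝ≥0∞)) ≤
        ∫⁻ x, ENNReal.ofReal (Cb * a) * (f1 x * f2 x) := by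
      apply lintegral_mono
      intro x
      have hd : |G (u k x) - G (v k x)| ≤ a * W x ^ (p-1) * |u k x - v k x| := by
        rw [hG, hG]
        exact Gdiff_aux p a hpm1 g hg hgrowth ha.le _ _
      have hb : |b x * (G (u k x) - G (v k x))| ≤ Cb * a * (|u k x - v k x| * W x ^ (p-1)) := by
        rw [abs_mul]
        calc |b x| * |G (u k x) - G (v k x)| ≤ Cb * (a * W x ^ (p-1) * |u k x - v k x|) :=
              mul_le_mul (hCb x) hd (abs_nonneg _) hCb0
          _ = Cb * a * (|u k x - v k x| * W x ^ (p-1)) := by ring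
      show (‖b x * (G (u k x) - G (v k x))‖₊ : ℝ≥0∞) ≤ ENNReal.ofReal (Cb * a) * (f1 x * f2 x)
      rw [← enorm_eq_nnnorm, Real.enorm_eq_ofReal_abs]
      have : f1 x * f2 x = ENNReal.ofReal (|u k x - v k x| * W x ^ (p-1)) := by
        rw [hf1, hf2]
        simp only []
        rw [ENNReal.ofReal_rpow_of_nonneg (hWnn x) hpm1,
          ← ENNReal.ofReal_mul (abs_nonneg _)]
      rw [this, ← ENNReal.ofReal_mul (by positivity)]
      exact ENNReal.ofReal_le_ofReal hb
    have step2 : (∫⁻ x, ENNReal.ofReal (Cb * a) * (f1 x * f2 x)) =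
        ENNReal.ofReal (Cb * a) * ∫⁻ x, f1 x * f2 x := by
      exact lintegral_const_mul' _ _ ENNReal.ofReal_ne_top
    have step3 : (∫⁻ x, f1 x * f2 x) ≤
        (∫⁻ x, f1 x ^ p) ^ (1/p) * (∫⁻ x, f2 x ^ q) ^ (1/q) :=
      ENNReal.lintegral_mul_le_Lp_mul_Lq volume hpq hf1m hf2m
    have e1 : (∫⁻ x, f1 x ^ p) ^ (1/p) = eLpNorm (u k - v k) e volume := by
      rw [eLpNorm_eq_lintegral_rpow_enorm_toReal he0 heT, het]
      congr 1
      apply lintegral_congr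
      intro x
      rw [hf1]
      simp only [Pi.sub_apply]
      rw [Real.enorm_eq_ofReal_abs]
    have e2 : (∫⁻ x, f2 x ^ q) ^ (1/q) = (eLpNorm W e volume) ^ (p - 1) := by
      have h1 : ∀ x, f2 x ^ q = (ENNReal.ofReal (W x)) ^ p := by
        intro x
        rw [hf2]
        simp only []
        rw [← ENNReal.rpow_mul, hqp]
      have h2 : (∫⁻ x, (ENNReal.ofReal (W x)) ^ p) = (eLpNorm W e volume) ^ p := by
        rw [eLpNorm_eq_lintegral_rpow_enorm_toReal he0 heT, het, ← ENNReal.rpow_mul,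
          one_div, inv_mul_cancel₀ (by linarith), ENNReal.rpow_one]
        apply lintegral_congr
        intro x
        rw [Real.enorm_eq_ofReal_abs, abs_of_nonneg (hWnn x)]
      rw [lintegral_congr h1, h2, ← ENNReal.rpow_mul, hpq']
    have hWle : eLpNorm W e volume ≤ C + C := by
      have habs : eLpNorm W e volume ≤
          eLpNorm (fun x => |u k x|) e volume + eLpNorm (fun x => |v k x|) e volume := by
        exact eLpNorm_add_le (μ := volume) (p := e) (hum k).norm (hvm k).norm he1
      have hu' : eLpNorm (fun x => |u k x|) e volume = eLpNorm (u k) e volume := by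
        simpa [Real.norm_eq_abs] using eLpNorm_norm (p := e) (μ := volume) (u k)
      have hv' : eLpNorm (fun x => |v k x|) e volume = eLpNorm (v k) e volume := by
        simpa [Real.norm_eq_abs] using eLpNorm_norm (p := e) (μ := volume) (v k)
      rw [hu', hv'] at habs
      exact le_trans habs (add_le_add (hub k) (hvb k))
    calc (∫⁻ x, (‖b x * (G (u k x) - G (v k x))‖₊ : ℝ≥0∞))
        ≤ ∫⁻ x, ENNReal.ofReal (Cb * a) * (f1 x * f2 x) := step1
      _ = ENNReal.ofReal (Cb * a) * ∫⁻ x, f1 x * f2 x := step2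
      _ ≤ ENNReal.ofReal (Cb * a) *
          ((∫⁻ x, f1 x ^ p) ^ (1/p) * (∫⁻ x, f2 x ^ q) ^ (1/q)) := by gcongr
      _ = ENNReal.ofReal (Cb * a) *
          (eLpNorm (u k - v k) e volume * (eLpNorm W e volume) ^ (p-1)) := by rw [e1, e2]
      _ ≤ ENNReal.ofReal (Cb * a) *
          (eLpNorm (u k - v k) e volume * (C + C) ^ (p-1)) := by
            gcongr
      _ = (ENNReal.ofReal (Cb * a) * (C + C) ^ (p-1)) * eLpNorm (u k - v k) e volume := by ring
  set K : ℝ≥0∞ := ENNReal.ofReal (Cb * a) * (C + C) ^ (p-1) with hK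
  have hKne : K ≠ ⊤ := by
    apply ENNReal.mul_ne_top ENNReal.ofReal_ne_top
    exact ENNReal.rpow_ne_top_of_nonneg hpm1 (ENNReal.add_ne_top.2 ⟨hC.ne, hC.ne⟩)
  have hKt : Tendsto (fun k => K * eLpNorm (u k - v k) e volume) atTop (nhds 0) := by
    simpa using ENNReal.Tendsto.const_mul hconv (Or.inr hKne)
  have hAt : Tendsto (fun k => ∫⁻ x, (‖b x * (G (u k x) - G (v k x))‖₊ : ℝ≥0∞))
      atTop (nhds 0) :=
    tendsto_of_tendsto_of_tendsto_of_le_of_le tendsto_const_nhds hKt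
      (fun k => zero_le) hA
  have hAr : Tendsto (fun k => (∫⁻ x, (‖b x * (G (u k x) - G (v k x))‖₊ : ℝ≥0∞)).toReal)
      atTop (nhds 0) := by
    simpa [Function.comp_def] using (ENNReal.tendsto_toReal (a := 0) (by simp)).comp hAt
  apply squeeze_zero_norm (fun k => ?_) hAr
  calc ‖∫ x, b x * (G (u k x) - G (v k x))‖
      ≤ (∫⁻ x, ENNReal.ofReal ‖b x * (G (u k x) - G (v k x))‖).toReal :=
        norm_integral_le_lintegral_norm _
    _ = (∫⁻ x, (‖b x * (G (u k x) - G (v k x))‖₊ : ℝ≥0∞)).toReal := by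
        simp_rw [ofReal_norm_eq_enorm, enorm_eq_nnnorm]
end

section
/- Let f : ℝ^N × ℝ → ℝ be continuous and satisfy: for every ε > 0 there exist C_ε > 0 and p_ε ∈ (2, 2*) with |f(x,s)| ≤ ε(|s| + |s|^{2*−1}) + C_ε |s|^{p_ε−1} for all (x,s). Let F(x,s) = ∫₀^s f(x,t) dt. If (u_k), (v_k) are sequences bounded in L²(ℝ^N) ∩ L^{2*}(ℝ^N) with u_k − v_k → 0 in L^p(ℝ^N) for some p ∈ (2, 2*), then ∫_{ℝ^N} (F(x, u_k) − F(x, v_k)) dx → 0. -/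
open MeasureTheory Filter ENNReal intervalIntegral

lemma eLp_repr {α : Type*} [MeasurableSpace α] (μ : Measure α) (w : α → ℝ) {q : ℝ} (hq : 0 < q) :
    (∫⁻ x, ENNReal.ofReal |w x| ^ q ∂μ) ^ (1/q) = eLpNorm w (ENNReal.ofReal q) μ := by
  rw [eLpNorm_eq_lintegral_rpow_enorm_toReal (by simp [hq, hq.le]) (by simp)]
  simp_rw [ENNReal.toReal_ofReal hq.le, Real.enorm_eq_ofReal_abs]

lemma holder_term {α : Type*} [MeasurableSpace α] {μ : Measure α} {W M : α → ℝ≥0∞}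
    (hW : AEMeasurable W μ) (hM : AEMeasurable M μ) {q : ℝ} (hq : 1 < q) :
    ∫⁻ x, W x * M x ^ (q - 1) ∂μ ≤
      (∫⁻ x, W x ^ q ∂μ) ^ (1/q) * ((∫⁻ x, M x ^ q ∂μ) ^ (1/q)) ^ (q - 1) := by
  have hcon : Real.HolderConjugate q (q / (q - 1)) := Real.HolderConjugate.conjExponent hq
  have hM1 : AEMeasurable (fun x => M x ^ (q - 1)) μ :=
    (ENNReal.continuous_rpow_const.measurable).comp_aemeasurable hM
  have := ENNReal.lintegral_mul_le_Lp_mul_Lq μ hcon hW hM1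
  refine this.trans (le_of_eq ?_)
  congr 1
  have h1 : ∀ x, (M x ^ (q - 1)) ^ (q / (q - 1)) = M x ^ q := by
    intro x
    rw [← ENNReal.rpow_mul]
    field_simp [sub_ne_zero.mpr hq.ne']
  simp_rw [h1]
  rw [← ENNReal.rpow_mul]
  congr 1
  rw [one_div_div]
  field_simp

lemma interp_lemma {α : Type*} [MeasurableSpace α] {μ : Measure α} {g : α → ℝ≥0∞}
    (hg : AEMeasurable g μ) {a b q θ : ℝ} (ha : 0 < a) (hb : 0 < b) (hq : 0 < q)
    (hθ : 0 < θ) (hθ1 : θ < 1) (hrel : θ / a + (1 - θ) / b = 1 / q) :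
    (∫⁻ x, g x ^ q ∂μ) ^ (1/q) ≤
      ((∫⁻ x, g x ^ a ∂μ) ^ (1/a)) ^ θ * ((∫⁻ x, g x ^ b ∂μ) ^ (1/b)) ^ (1 - θ) := by
  have hθa : θ * q < a := by
    have h1 : θ / a < 1 / q := by
      have : (0:ℝ) < (1 - θ) / b := div_pos (by linarith) hb
      linarith
    rw [div_lt_div_iff₀ ha hq] at h1; linarith
  have hθb : (1 - θ) * q < b := by
    have h1 : (1 - θ) / b < 1 / q := by
      have : (0:ℝ) < θ / a := by positivity
      linarith
    rw [div_lt_div_iff₀ hb hq] at h1; linarith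
  set s : ℝ := a / (θ * q) with hs
  set s' : ℝ := b / ((1 - θ) * q) with hs'
  have hθq : (0:ℝ) < θ * q := by positivity
  have h1θq : (0:ℝ) < (1 - θ) * q := mul_pos (by linarith) hq
  have hcon : Real.HolderConjugate s s' := by
    rw [Real.holderConjugate_iff]
    constructor
    · rw [hs, lt_div_iff₀ hθq]; linarith
    · rw [hs, hs']
      rw [inv_div, inv_div]
      rw [div_add_div _ _ (ne_of_gt ha) (ne_of_gt hb)]
      rw [div_eq_one_iff_eq (by positivity)]
      have : θ / a + (1 - θ) / b = 1 / q := hrel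
      field_simp at this ⊢
      nlinarith [this]
  have hga : AEMeasurable (fun x => g x ^ (θ * q)) μ :=
    (ENNReal.continuous_rpow_const.measurable).comp_aemeasurable hg
  have hgb : AEMeasurable (fun x => g x ^ ((1 - θ) * q)) μ :=
    (ENNReal.continuous_rpow_const.measurable).comp_aemeasurable hg
  have key : ∫⁻ x, g x ^ q ∂μ ≤
      (∫⁻ x, g x ^ a ∂μ) ^ (θ * q / a) * (∫⁻ x, g x ^ b ∂μ) ^ ((1 - θ) * q / b) := by
    have hsplit : ∀ x, g x ^ q = g x ^ (θ * q) * g x ^ ((1 - θ) * q) := by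
      intro x
      rw [← ENNReal.rpow_add_of_nonneg _ _ (le_of_lt hθq) (le_of_lt h1θq)]
      congr 1; ring
    calc ∫⁻ x, g x ^ q ∂μ = ∫⁻ x, g x ^ (θ * q) * g x ^ ((1 - θ) * q) ∂μ := by
          simp_rw [hsplit]
      _ ≤ (∫⁻ x, (g x ^ (θ * q)) ^ s ∂μ) ^ (1/s) * (∫⁻ x, (g x ^ ((1 - θ) * q)) ^ s' ∂μ) ^ (1/s') :=
          ENNReal.lintegral_mul_le_Lp_mul_Lq μ hcon hga hgb
      _ = (∫⁻ x, g x ^ a ∂μ) ^ (θ * q / a) * (∫⁻ x, g x ^ b ∂μ) ^ ((1 - θ) * q / b) := by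
          have e1 : ∀ x, (g x ^ (θ * q)) ^ s = g x ^ a := by
            intro x; rw [← ENNReal.rpow_mul]; congr 1
            rw [hs]; field_simp
          have e2 : ∀ x, (g x ^ ((1 - θ) * q)) ^ s' = g x ^ b := by
            intro x; rw [← ENNReal.rpow_mul]; congr 1
            rw [hs']; field_simp [(sub_pos.mpr hθ1).ne']
          simp_rw [e1, e2]
          rw [hs, hs', one_div_div, one_div_div]
  calc (∫⁻ x, g x ^ q ∂μ) ^ (1/q)
      ≤ ((∫⁻ x, g x ^ a ∂μ) ^ (θ * q / a) * (∫⁻ x, g x ^ b ∂μ) ^ ((1 - θ) * q / b)) ^ (1/q) :=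
        ENNReal.rpow_le_rpow key (by positivity)
    _ = ((∫⁻ x, g x ^ a ∂μ) ^ (1/a)) ^ θ * ((∫⁻ x, g x ^ b ∂μ) ^ (1/b)) ^ (1 - θ) := by
        rw [ENNReal.mul_rpow_of_nonneg _ _ (by positivity)]
        rw [← ENNReal.rpow_mul, ← ENNReal.rpow_mul, ← ENNReal.rpow_mul, ← ENNReal.rpow_mul]
        congr 1 <;> congr 1 <;> field_simp <;> ring

lemma interp_eLpNorm {α : Type*} [MeasurableSpace α] {μ : Measure α} {g : α → ℝ}
    (hg : AEStronglyMeasurable g μ) {a b q : ℝ} (ha : 0 < a) (haq : a < q) (hqb : q < b) :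
    eLpNorm g (ENNReal.ofReal q) μ ≤
      (eLpNorm g (ENNReal.ofReal a) μ) ^ (a*(b-q)/(q*(b-a))) *
      (eLpNorm g (ENNReal.ofReal b) μ) ^ (1 - a*(b-q)/(q*(b-a))) := by
  have hq : 0 < q := ha.trans haq
  have hb : 0 < b := hq.trans hqb
  have hba : (0:ℝ) < b - a := by linarith
  have hθ : 0 < a*(b-q)/(q*(b-a)) := div_pos (mul_pos ha (by linarith)) (mul_pos hq hba)
  have hθ1 : a*(b-q)/(q*(b-a)) < 1 := by
    rw [div_lt_one (mul_pos hq hba)]; nlinarith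
  have hrel : (a*(b-q)/(q*(b-a))) / a + (1 - a*(b-q)/(q*(b-a))) / b = 1 / q := by
    field_simp
    ring
  have hmeas : AEMeasurable (fun x => ENNReal.ofReal |g x|) μ :=
    (ENNReal.continuous_ofReal.comp continuous_abs).measurable.comp_aemeasurable hg.aemeasurable
  have := interp_lemma hmeas ha hb hq hθ hθ1 hrel
  rwa [eLp_repr μ g hq, eLp_repr μ g ha, eLp_repr μ g hb] at this

lemma tendsto_helper {h : ℕ → ℝ≥0∞} (hh : Tendsto h atTop (nhds 0)) {K : ℝ≥0∞} (hK : K ≠ ⊤)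
    {t : ℝ} (ht : 0 < t) : Tendsto (fun k => K * h k ^ t) atTop (nhds 0) := by
  have h1 : Tendsto (fun k => h k ^ t) atTop (nhds ((0:ℝ≥0∞) ^ t)) :=
    (ENNReal.continuous_rpow_const.tendsto 0).comp hh
  rw [ENNReal.zero_rpow_of_pos ht] at h1
  have := ENNReal.Tendsto.const_mul h1 (Or.inr hK)
  simpa using this

lemma tendsto_interp_high {α : Type*} [MeasurableSpace α] {μ : Measure α} {w : ℕ → α → ℝ}
    (hw : ∀ k, AEStronglyMeasurable (w k) μ) {a b q : ℝ} {B : ℝ≥0∞} (hB : B ≠ ⊤)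
    (ha : 0 < a) (haq : a < q) (hqb : q < b)
    (hwa : ∀ k, eLpNorm (w k) (ENNReal.ofReal a) μ ≤ B)
    (hconv : Tendsto (fun k => eLpNorm (w k) (ENNReal.ofReal b) μ) atTop (nhds 0)) :
    Tendsto (fun k => eLpNorm (w k) (ENNReal.ofReal q) μ) atTop (nhds 0) := by
  have hq : 0 < q := ha.trans haq
  have hba : (0:ℝ) < b - a := by linarith
  have hθ : 0 < a*(b-q)/(q*(b-a)) := div_pos (mul_pos ha (by linarith)) (mul_pos hq hba)
  have hθ1 : a*(b-q)/(q*(b-a)) < 1 := by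
    rw [div_lt_one (mul_pos hq hba)]; nlinarith
  have hbound : ∀ k, eLpNorm (w k) (ENNReal.ofReal q) μ ≤
      B ^ (a*(b-q)/(q*(b-a))) * (eLpNorm (w k) (ENNReal.ofReal b) μ) ^ (1 - a*(b-q)/(q*(b-a))) :=
    fun k => (interp_eLpNorm (hw k) ha haq hqb).trans
      (mul_le_mul_left (ENNReal.rpow_le_rpow (hwa k) hθ.le) _)
  exact tendsto_of_tendsto_of_tendsto_of_le_of_le tendsto_const_nhds
    (tendsto_helper hconv (ENNReal.rpow_ne_top_of_nonneg hθ.le hB) (by linarith))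
    (fun k => zero_le) hbound

lemma tendsto_interp_low {α : Type*} [MeasurableSpace α] {μ : Measure α} {w : ℕ → α → ℝ}
    (hw : ∀ k, AEStronglyMeasurable (w k) μ) {a b q : ℝ} {B : ℝ≥0∞} (hB : B ≠ ⊤)
    (ha : 0 < a) (haq : a < q) (hqb : q < b)
    (hwb : ∀ k, eLpNorm (w k) (ENNReal.ofReal b) μ ≤ B)
    (hconv : Tendsto (fun k => eLpNorm (w k) (ENNReal.ofReal a) μ) atTop (nhds 0)) :
    Tendsto (fun k => eLpNorm (w k) (ENNReal.ofReal q) μ) atTop (nhds 0) := by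
  have hq : 0 < q := ha.trans haq
  have hba : (0:ℝ) < b - a := by linarith
  have hθ : 0 < a*(b-q)/(q*(b-a)) := div_pos (mul_pos ha (by linarith)) (mul_pos hq hba)
  have hθ1 : a*(b-q)/(q*(b-a)) < 1 := by
    rw [div_lt_one (mul_pos hq hba)]; nlinarith
  have hbound : ∀ k, eLpNorm (w k) (ENNReal.ofReal q) μ ≤
      B ^ (1 - a*(b-q)/(q*(b-a))) * (eLpNorm (w k) (ENNReal.ofReal a) μ) ^ (a*(b-q)/(q*(b-a))) := by
    intro k
    refine (interp_eLpNorm (hw k) ha haq hqb).trans ?_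
    rw [mul_comm]
    exact mul_le_mul_left (ENNReal.rpow_le_rpow (hwb k) (by linarith)) _
  exact tendsto_of_tendsto_of_tendsto_of_le_of_le tendsto_const_nhds
    (tendsto_helper hconv (ENNReal.rpow_ne_top_of_nonneg (by linarith) hB) hθ)
    (fun k => zero_le) hbound

lemma pointwise_F_bound {X : Type*} [TopologicalSpace X]
    (f : X → ℝ → ℝ) (hfc : Continuous fun q : X × ℝ => f q.1 q.2)
    {ε Cε pstar pε : ℝ} (hps : 1 ≤ pstar - 1) (hpe : 1 ≤ pε - 1)
    (hεpos : 0 < ε) (hCpos : 0 < Cε)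
    (hbd : ∀ (x : X) (s : ℝ), |f x s| ≤ ε * (|s| + |s| ^ (pstar - 1)) + Cε * |s| ^ (pε - 1))
    (x : X) (a b : ℝ) :
    |(∫ t in (0:ℝ)..a, f x t) - ∫ t in (0:ℝ)..b, f x t| ≤
      (ε * ((|a| + |b|) + (|a| + |b|) ^ (pstar - 1)) + Cε * (|a| + |b|) ^ (pε - 1)) * |a - b| := by
  have hcont : Continuous (f x) := hfc.comp (Continuous.prodMk_right x)
  have hii : ∀ c d : ℝ, IntervalIntegrable (f x) MeasureTheory.volume c d :=
    fun c d => hcont.intervalIntegrable c d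
  have heq : (∫ t in (0:ℝ)..a, f x t) - ∫ t in (0:ℝ)..b, f x t = ∫ t in b..a, f x t :=
    integral_interval_sub_left (hii 0 a) (hii 0 b)
  rw [heq]
  set M : ℝ := |a| + |b| with hM
  have hM0 : 0 ≤ M := by positivity
  have key : ∀ t ∈ Set.uIoc b a, ‖f x t‖ ≤ ε * (M + M ^ (pstar - 1)) + Cε * M ^ (pε - 1) := by
    intro t ht
    have htM : |t| ≤ M := by
      rcases Set.mem_uIoc.1 ht with h | h <;>
        · rw [abs_le]
          constructor <;> nlinarith [neg_abs_le a, le_abs_self a, neg_abs_le b, le_abs_self b]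
    have h1 := hbd x t
    rw [Real.norm_eq_abs]
    refine h1.trans ?_
    exact add_le_add
      (mul_le_mul_of_nonneg_left
        (add_le_add htM (Real.rpow_le_rpow (abs_nonneg t) htM (by linarith))) hεpos.le)
      (mul_le_mul_of_nonneg_left (Real.rpow_le_rpow (abs_nonneg t) htM (by linarith)) hCpos.le)
  have := intervalIntegral.norm_integral_le_of_norm_le_const key
  rw [Real.norm_eq_abs] at this
  exact this.trans (by rw [abs_sub_comm])

lemma core_bound {α : Type*} [MeasurableSpace α] {μ : Measure α} {U V G : α → ℝ}
    (hU : AEStronglyMeasurable U μ) (hV : AEStronglyMeasurable V μ)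
    {ε1 Cε ps pe : ℝ} (hps : 2 < ps) (hpe : 1 < pe) (hε1 : 0 < ε1) (hCε : 0 < Cε)
    (hpt : ∀ x, |G x| ≤ (ε1 * ((|U x| + |V x|) + (|U x| + |V x|) ^ (ps - 1))
        + Cε * (|U x| + |V x|) ^ (pe - 1)) * |U x - V x|) :
    ∫⁻ x, ENNReal.ofReal ‖G x‖ ∂μ ≤
      ENNReal.ofReal ε1 * (eLpNorm (U - V) (ENNReal.ofReal 2) μ
          * eLpNorm (fun x => |U x| + |V x|) (ENNReal.ofReal 2) μ
        + eLpNorm (U - V) (ENNReal.ofReal ps) μ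
          * (eLpNorm (fun x => |U x| + |V x|) (ENNReal.ofReal ps) μ) ^ (ps - 1))
      + ENNReal.ofReal Cε * (eLpNorm (U - V) (ENNReal.ofReal pe) μ
          * (eLpNorm (fun x => |U x| + |V x|) (ENNReal.ofReal pe) μ) ^ (pe - 1)) := by
  have hwr : AEMeasurable (fun x => (U - V) x) μ := (hU.sub hV).aemeasurable
  have hWm : AEMeasurable (fun x => ENNReal.ofReal |(U - V) x|) μ :=
    (ENNReal.continuous_ofReal.comp continuous_abs).measurable.comp_aemeasurable hwr
  have hMr : AEMeasurable (fun x => |U x| + |V x|) μ :=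
    ((continuous_abs.measurable.comp_aemeasurable hU.aemeasurable).add
      (continuous_abs.measurable.comp_aemeasurable hV.aemeasurable))
  have hMm : AEMeasurable (fun x => ENNReal.ofReal (|U x| + |V x|)) μ :=
    ENNReal.measurable_ofReal.comp_aemeasurable hMr
  have hMp : ∀ r : ℝ, AEMeasurable (fun x => ENNReal.ofReal (|U x| + |V x|) ^ r) μ := fun r =>
    (ENNReal.continuous_rpow_const.measurable).comp_aemeasurable hMm
  have hT : ∀ r : ℝ, AEMeasurable
      (fun x => ENNReal.ofReal |(U - V) x| * ENNReal.ofReal (|U x| + |V x|) ^ r) μ :=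
    fun r => hWm.mul (hMp r)
  have hptE : ∀ x, ENNReal.ofReal ‖G x‖ ≤
      ENNReal.ofReal ε1 * (ENNReal.ofReal |(U - V) x| * ENNReal.ofReal (|U x| + |V x|) ^ ((2:ℝ) - 1)
        + ENNReal.ofReal |(U - V) x| * ENNReal.ofReal (|U x| + |V x|) ^ (ps - 1))
      + ENNReal.ofReal Cε * (ENNReal.ofReal |(U - V) x|
          * ENNReal.ofReal (|U x| + |V x|) ^ (pe - 1)) := by
    intro x
    have h21 : ((2:ℝ) - 1) = 1 := by norm_num
    rw [Real.norm_eq_abs, Pi.sub_apply, h21, ENNReal.rpow_one]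
    refine le_trans (ENNReal.ofReal_le_ofReal (hpt x)) (le_of_eq ?_)
    rw [ENNReal.ofReal_mul (by positivity), ENNReal.ofReal_add (by positivity) (by positivity),
      ENNReal.ofReal_mul hε1.le, ENNReal.ofReal_mul hCε.le,
      ENNReal.ofReal_add (by positivity) (by positivity),
      ← ENNReal.ofReal_rpow_of_nonneg (by positivity) (by linarith),
      ← ENNReal.ofReal_rpow_of_nonneg (by positivity) (by linarith)]
    ring
  have h2pos : (0:ℝ) < 2 := two_pos
  have hps0 : (0:ℝ) < ps := by linarith
  have hpe0 : (0:ℝ) < pe := by linarith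
  have eW2 : (∫⁻ x, ENNReal.ofReal |(U - V) x| ^ (2:ℝ) ∂μ) ^ (1/(2:ℝ))
      = eLpNorm (U - V) (ENNReal.ofReal 2) μ := eLp_repr μ (U - V) h2pos
  have eWs : (∫⁻ x, ENNReal.ofReal |(U - V) x| ^ ps ∂μ) ^ (1/ps)
      = eLpNorm (U - V) (ENNReal.ofReal ps) μ := eLp_repr μ (U - V) hps0
  have eWe : (∫⁻ x, ENNReal.ofReal |(U - V) x| ^ pe ∂μ) ^ (1/pe)
      = eLpNorm (U - V) (ENNReal.ofReal pe) μ := eLp_repr μ (U - V) hpe0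
  have habs : ∀ x, |(|U x| + |V x|)| = |U x| + |V x| := fun x => abs_of_nonneg (by positivity)
  have eM : ∀ q : ℝ, 0 < q → (∫⁻ x, ENNReal.ofReal (|U x| + |V x|) ^ q ∂μ) ^ (1/q)
      = eLpNorm (fun x => |U x| + |V x|) (ENNReal.ofReal q) μ := by
    intro q hq
    rw [← eLp_repr μ (fun x => |U x| + |V x|) hq]
    congr 1
    apply lintegral_congr
    intro x
    rw [habs x]
  calc ∫⁻ x, ENNReal.ofReal ‖G x‖ ∂μ
      ≤ ∫⁻ x, (ENNReal.ofReal ε1 * (ENNReal.ofReal |(U - V) x|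
            * ENNReal.ofReal (|U x| + |V x|) ^ ((2:ℝ) - 1)
          + ENNReal.ofReal |(U - V) x| * ENNReal.ofReal (|U x| + |V x|) ^ (ps - 1))
        + ENNReal.ofReal Cε * (ENNReal.ofReal |(U - V) x|
            * ENNReal.ofReal (|U x| + |V x|) ^ (pe - 1))) ∂μ := lintegral_mono hptE
    _ = ENNReal.ofReal ε1 * ((∫⁻ x, ENNReal.ofReal |(U - V) x|
            * ENNReal.ofReal (|U x| + |V x|) ^ ((2:ℝ) - 1) ∂μ)
          + ∫⁻ x, ENNReal.ofReal |(U - V) x| * ENNReal.ofReal (|U x| + |V x|) ^ (ps - 1) ∂μ)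
        + ENNReal.ofReal Cε * ∫⁻ x, ENNReal.ofReal |(U - V) x|
            * ENNReal.ofReal (|U x| + |V x|) ^ (pe - 1) ∂μ := by
        rw [lintegral_add_left' (((hT _).fun_add (hT _)).const_mul _),
          lintegral_const_mul' _ _ ENNReal.ofReal_ne_top,
          lintegral_const_mul' _ _ ENNReal.ofReal_ne_top,
          lintegral_add_left' (hT _)]
    _ ≤ ENNReal.ofReal ε1 * ((∫⁻ x, ENNReal.ofReal |(U - V) x| ^ (2:ℝ) ∂μ) ^ (1/(2:ℝ))
            * ((∫⁻ x, ENNReal.ofReal (|U x| + |V x|) ^ (2:ℝ) ∂μ) ^ (1/(2:ℝ))) ^ ((2:ℝ) - 1)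
          + (∫⁻ x, ENNReal.ofReal |(U - V) x| ^ ps ∂μ) ^ (1/ps)
            * ((∫⁻ x, ENNReal.ofReal (|U x| + |V x|) ^ ps ∂μ) ^ (1/ps)) ^ (ps - 1))
        + ENNReal.ofReal Cε * ((∫⁻ x, ENNReal.ofReal |(U - V) x| ^ pe ∂μ) ^ (1/pe)
            * ((∫⁻ x, ENNReal.ofReal (|U x| + |V x|) ^ pe ∂μ) ^ (1/pe)) ^ (pe - 1)) := by
        refine add_le_add (mul_le_mul_right (add_le_add ?_ ?_) _) (mul_le_mul_right ?_ _)
        · exact holder_term hWm hMm one_lt_two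
        · exact holder_term hWm hMm (by linarith)
        · exact holder_term hWm hMm hpe
    _ = _ := by
        rw [eW2, eWs, eWe, eM 2 h2pos, eM ps hps0, eM pe hpe0]
        have h21 : ((2:ℝ) - 1) = 1 := by norm_num
        rw [h21, ENNReal.rpow_one]

theorem stmt_10 (N : ℕ) (hN : 3 ≤ N) (pstar : ℝ)
    (hps : pstar = 2 * (N : ℝ) / ((N : ℝ) - 2))
    (f : EuclideanSpace ℝ (Fin N) → ℝ → ℝ)
    (hfc : Continuous fun q : EuclideanSpace ℝ (Fin N) × ℝ => f q.1 q.2)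
    (hf : ∀ ε > (0 : ℝ), ∃ Cε > (0 : ℝ), ∃ pε ∈ Set.Ioo (2 : ℝ) pstar,
      ∀ (x : EuclideanSpace ℝ (Fin N)) (s : ℝ),
        |f x s| ≤ ε * (|s| + |s| ^ (pstar - 1)) + Cε * |s| ^ (pε - 1))
    (F : EuclideanSpace ℝ (Fin N) → ℝ → ℝ)
    (hF : ∀ (x : EuclideanSpace ℝ (Fin N)) (s : ℝ), F x s = ∫ t in (0 : ℝ)..s, f x t)
    (u v : ℕ → EuclideanSpace ℝ (Fin N) → ℝ)
    (hum : ∀ k, AEStronglyMeasurable (u k) volume)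
    (hvm : ∀ k, AEStronglyMeasurable (v k) volume)
    (C : ℝ≥0∞) (hC : C < ⊤)
    (hub : ∀ k, eLpNorm (u k) 2 volume ≤ C ∧
      eLpNorm (u k) (ENNReal.ofReal pstar) volume ≤ C)
    (hvb : ∀ k, eLpNorm (v k) 2 volume ≤ C ∧
      eLpNorm (v k) (ENNReal.ofReal pstar) volume ≤ C)
    (p : ℝ) (hpmem : p ∈ Set.Ioo (2 : ℝ) pstar)
    (hconv : Tendsto (fun k => eLpNorm (u k - v k) (ENNReal.ofReal p) volume)
      atTop (nhds 0)) :
    Tendsto (fun k => ∫ x, F x (u k x) - F x (v k x)) atTop (nhds 0) := by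
  have hN' : (3:ℝ) ≤ (N:ℝ) := by exact_mod_cast hN
  have hden : (0:ℝ) < (N:ℝ) - 2 := by linarith
  have hps2 : (2:ℝ) < pstar := by
    rw [hps, lt_div_iff₀ hden]; linarith
  obtain ⟨hp2, hpps⟩ := hpmem
  have hwm : ∀ k, AEStronglyMeasurable (u k - v k) volume := fun k => (hum k).sub (hvm k)
  have hCne : C ≠ ⊤ := hC.ne
  have hBne : C + C ≠ ⊤ := ENNReal.add_ne_top.2 ⟨hCne, hCne⟩
  have hofr2 : ENNReal.ofReal (2:ℝ) = 2 := ENNReal.ofReal_ofNat 2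
  have h1ps : (1:ℝ≥0∞) ≤ ENNReal.ofReal pstar := by
    rw [ENNReal.one_le_ofReal]; linarith
  have hw2 : ∀ k, eLpNorm (u k - v k) (ENNReal.ofReal 2) volume ≤ C + C := by
    intro k
    rw [hofr2]
    exact (eLpNorm_sub_le (hum k) (hvm k) one_le_two).trans (add_le_add (hub k).1 (hvb k).1)
  have hwps : ∀ k, eLpNorm (u k - v k) (ENNReal.ofReal pstar) volume ≤ C + C := fun k =>
    (eLpNorm_sub_le (hum k) (hvm k) h1ps).trans (add_le_add (hub k).2 (hvb k).2)
  have hMle : ∀ k (q : ℝ≥0∞), 1 ≤ q →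
      eLpNorm (fun x => |u k x| + |v k x|) q volume ≤
        eLpNorm (u k) q volume + eLpNorm (v k) q volume := by
    intro k q hq
    have hu' : AEStronglyMeasurable (fun x => |u k x|) volume := by
      simpa [Real.norm_eq_abs] using (hum k).norm
    have hv' : AEStronglyMeasurable (fun x => |v k x|) volume := by
      simpa [Real.norm_eq_abs] using (hvm k).norm
    have h1 := eLpNorm_add_le hu' hv' hq
    have e1 : eLpNorm (fun x => |u k x|) q volume = eLpNorm (u k) q volume := by
      simpa [Real.norm_eq_abs] using eLpNorm_norm (p := q) (μ := volume) (u k)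
    have e2 : eLpNorm (fun x => |v k x|) q volume = eLpNorm (v k) q volume := by
      simpa [Real.norm_eq_abs] using eLpNorm_norm (p := q) (μ := volume) (v k)
    have h0 : (fun x => |u k x| + |v k x|)
        = ((fun x => |u k x|) + fun x => |v k x|) := rfl
    rw [h0]
    exact h1.trans (le_of_eq (by rw [e1, e2]))
  have hM2 : ∀ k, eLpNorm (fun x => |u k x| + |v k x|) (ENNReal.ofReal 2) volume ≤ C + C := by
    intro k
    rw [hofr2]
    exact (hMle k 2 one_le_two).trans (add_le_add (hub k).1 (hvb k).1)
  have hMps : ∀ k, eLpNorm (fun x => |u k x| + |v k x|) (ENNReal.ofReal pstar) volume ≤ C + C :=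
    fun k => (hMle k _ h1ps).trans (add_le_add (hub k).2 (hvb k).2)
  -- set up the constant A
  set B : ℝ≥0∞ := C + C with hBdef
  set A : ℝ≥0∞ := B * B + B * B ^ (pstar - 1) with hAdef
  have hAne : A ≠ ⊤ := by
    have h1 : B ^ (pstar - 1) ≠ ⊤ := ENNReal.rpow_ne_top_of_nonneg (by linarith) hBne
    exact ENNReal.add_ne_top.2 ⟨ENNReal.mul_ne_top hBne hBne, ENNReal.mul_ne_top hBne h1⟩
  rw [NormedAddCommGroup.tendsto_nhds_zero]
  intro ε hε
  set ε1 : ℝ := ε / (2 * (A.toReal + 1)) with hε1def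
  have hε1 : 0 < ε1 := div_pos hε (by positivity)
  obtain ⟨Cε, hCε, pε, hpεm, hbd⟩ := hf ε1 hε1
  obtain ⟨hpε2, hpεps⟩ := hpεm
  -- convergence of the difference at exponent pε
  have hwpe : Tendsto (fun k => eLpNorm (u k - v k) (ENNReal.ofReal pε) volume)
      atTop (nhds 0) := by
    rcases lt_trichotomy pε p with hlt | heq | hgt
    · exact tendsto_interp_high hwm hBne two_pos hpε2 hlt hw2 hconv
    · rw [heq]; exact hconv
    · exact tendsto_interp_low hwm hBne (by linarith : (0:ℝ) < p) hgt hpεps hwps hconv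
  -- bound for M at exponent pε via interpolation
  set Du : ℝ≥0∞ := C ^ (2*(pstar-pε)/(pε*(pstar-2))) * C ^ (1 - 2*(pstar-pε)/(pε*(pstar-2)))
    with hDudef
  have hθpos : 0 < 2*(pstar-pε)/(pε*(pstar-2)) :=
    div_pos (by nlinarith) (by nlinarith)
  have hθlt : 2*(pstar-pε)/(pε*(pstar-2)) < 1 := by
    rw [div_lt_one (by nlinarith)]; nlinarith
  have hDune : Du ≠ ⊤ :=
    ENNReal.mul_ne_top (ENNReal.rpow_ne_top_of_nonneg hθpos.le hCne)
      (ENNReal.rpow_ne_top_of_nonneg (by linarith) hCne)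
  have hDu : ∀ k, eLpNorm (u k) (ENNReal.ofReal pε) volume ≤ Du := by
    intro k
    refine (interp_eLpNorm (hum k) two_pos hpε2 hpεps).trans ?_
    rw [hDudef]
    refine mul_le_mul' (ENNReal.rpow_le_rpow ?_ hθpos.le)
      (ENNReal.rpow_le_rpow (hub k).2 (by linarith))
    rw [hofr2]; exact (hub k).1
  have hDv : ∀ k, eLpNorm (v k) (ENNReal.ofReal pε) volume ≤ Du := by
    intro k
    refine (interp_eLpNorm (hvm k) two_pos hpε2 hpεps).trans ?_
    rw [hDudef]
    refine mul_le_mul' (ENNReal.rpow_le_rpow ?_ hθpos.le)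
      (ENNReal.rpow_le_rpow (hvb k).2 (by linarith))
    rw [hofr2]; exact (hvb k).1
  have h1pε : (1:ℝ≥0∞) ≤ ENNReal.ofReal pε := by
    rw [ENNReal.one_le_ofReal]; linarith
  have hMpε : ∀ k, eLpNorm (fun x => |u k x| + |v k x|) (ENNReal.ofReal pε) volume ≤ Du + Du :=
    fun k => (hMle k _ h1pε).trans (add_le_add (hDu k) (hDv k))
  -- core bound
  have hcore : ∀ k, (∫⁻ x, ENNReal.ofReal ‖F x (u k x) - F x (v k x)‖ ∂volume) ≤
      ENNReal.ofReal ε1 * A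
      + (ENNReal.ofReal Cε * (Du + Du) ^ (pε - 1))
        * eLpNorm (u k - v k) (ENNReal.ofReal pε) volume := by
    intro k
    have hptk : ∀ x, |F x (u k x) - F x (v k x)| ≤
        (ε1 * ((|u k x| + |v k x|) + (|u k x| + |v k x|) ^ (pstar - 1))
          + Cε * (|u k x| + |v k x|) ^ (pε - 1)) * |u k x - v k x| := by
      intro x
      rw [hF, hF]
      exact pointwise_F_bound f hfc (by linarith) (by linarith) hε1 hCε hbd x (u k x) (v k x)
    have h0 := core_bound (hum k) (hvm k) hps2 (show (1:ℝ) < pε by linarith) hε1 hCε hptk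
    refine h0.trans ?_
    have hstep1 : eLpNorm (u k - v k) (ENNReal.ofReal 2) volume
          * eLpNorm (fun x => |u k x| + |v k x|) (ENNReal.ofReal 2) volume
        + eLpNorm (u k - v k) (ENNReal.ofReal pstar) volume
          * (eLpNorm (fun x => |u k x| + |v k x|) (ENNReal.ofReal pstar) volume) ^ (pstar - 1)
        ≤ A := by
      rw [hAdef]
      exact add_le_add (mul_le_mul' (hw2 k) (hM2 k))
        (mul_le_mul' (hwps k) (ENNReal.rpow_le_rpow (hMps k) (by linarith)))
    have hstep2 : eLpNorm (u k - v k) (ENNReal.ofReal pε) volume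
          * (eLpNorm (fun x => |u k x| + |v k x|) (ENNReal.ofReal pε) volume) ^ (pε - 1)
        ≤ (Du + Du) ^ (pε - 1) * eLpNorm (u k - v k) (ENNReal.ofReal pε) volume := by
      rw [mul_comm]
      exact mul_le_mul_left (ENNReal.rpow_le_rpow (hMpε k) (by linarith)) _
    calc ENNReal.ofReal ε1 * (eLpNorm (u k - v k) (ENNReal.ofReal 2) volume
            * eLpNorm (fun x => |u k x| + |v k x|) (ENNReal.ofReal 2) volume
          + eLpNorm (u k - v k) (ENNReal.ofReal pstar) volume
            * (eLpNorm (fun x => |u k x| + |v k x|) (ENNReal.ofReal pstar) volume) ^ (pstar - 1))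
        + ENNReal.ofReal Cε * (eLpNorm (u k - v k) (ENNReal.ofReal pε) volume
            * (eLpNorm (fun x => |u k x| + |v k x|) (ENNReal.ofReal pε) volume) ^ (pε - 1))
        ≤ ENNReal.ofReal ε1 * A
          + ENNReal.ofReal Cε * ((Du + Du) ^ (pε - 1)
            * eLpNorm (u k - v k) (ENNReal.ofReal pε) volume) :=
          add_le_add (mul_le_mul_right hstep1 _) (mul_le_mul_right hstep2 _)
      _ = ENNReal.ofReal ε1 * A + (ENNReal.ofReal Cε * (Du + Du) ^ (pε - 1))
            * eLpNorm (u k - v k) (ENNReal.ofReal pε) volume := by ring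
  -- first summand small
  have hfirst : ENNReal.ofReal ε1 * A ≤ ENNReal.ofReal (ε/2) := by
    conv_lhs => rw [← ENNReal.ofReal_toReal hAne]
    rw [← ENNReal.ofReal_mul hε1.le]
    apply ENNReal.ofReal_le_ofReal
    have hAt : 0 ≤ A.toReal := ENNReal.toReal_nonneg
    rw [hε1def, div_mul_eq_mul_div, div_le_div_iff₀ (by positivity) two_pos]
    nlinarith
  -- second summand eventually small
  have hKne : ENNReal.ofReal Cε * (Du + Du) ^ (pε - 1) ≠ ⊤ :=
    ENNReal.mul_ne_top ENNReal.ofReal_ne_top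
      (ENNReal.rpow_ne_top_of_nonneg (by linarith) (ENNReal.add_ne_top.2 ⟨hDune, hDune⟩))
  have htail : Tendsto (fun k => (ENNReal.ofReal Cε * (Du + Du) ^ (pε - 1))
      * eLpNorm (u k - v k) (ENNReal.ofReal pε) volume) atTop (nhds 0) := by
    have := ENNReal.Tendsto.const_mul hwpe (Or.inr hKne)
    simpa using this
  have hev : ∀ᶠ k in atTop, (ENNReal.ofReal Cε * (Du + Du) ^ (pε - 1))
      * eLpNorm (u k - v k) (ENNReal.ofReal pε) volume < ENNReal.ofReal (ε/2) :=
    htail.eventually_lt_const (by simp [ENNReal.ofReal_pos]; linarith)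
  filter_upwards [hev] with k hk
  have hΦlt : (∫⁻ x, ENNReal.ofReal ‖F x (u k x) - F x (v k x)‖ ∂volume)
      < ENNReal.ofReal ε := by
    refine lt_of_le_of_lt (hcore k) ?_
    have : ENNReal.ofReal (ε/2) + ENNReal.ofReal (ε/2) = ENNReal.ofReal ε := by
      rw [← ENNReal.ofReal_add (by linarith) (by linarith)]
      norm_num
    rw [← this]
    exact lt_of_le_of_lt (add_le_add hfirst le_rfl)
      (ENNReal.add_lt_add_left ENNReal.ofReal_ne_top hk)
  exact lt_of_le_of_lt (norm_integral_le_lintegral_norm _)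
    (ENNReal.toReal_lt_of_lt_ofReal hΦlt)
end

section
/- Let N ≥ 3, 2* = 2N/(N−2), ω > 0, A, B, E > 0 with B < A, and γ = exp(4π/(ω(N−2))). Define g(s) = (A + B sin(ω ln|s|) + E)|s|^{2*−2} s for s ≠ 0 and g(0) = 0, and G(s) = ∫₀^s g. Then G is self-similar with parameter γ: G(s) = γ^{−Nj} G(γ^{((N−2)/2) j} s) for all j ∈ ℤ and s ∈ ℝ, and moreover g(s)s > 0 for s ≠ 0 and G(s) ≥ ((A−B+E)/2*) |s|^{2*} for all s. -/
open Real MeasureTheory intervalIntegral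

theorem stmt_15 (N : ℕ) (hN : 3 ≤ N) (pstar : ℝ)
    (hps : pstar = 2 * (N : ℝ) / ((N : ℝ) - 2))
    (ω A B E : ℝ) (hω : 0 < ω) (hA : 0 < A) (hB : 0 < B) (hE : 0 < E) (hBA : B < A)
    (γ : ℝ) (hγ : γ = Real.exp (4 * Real.pi / (ω * ((N : ℝ) - 2))))
    (g G : ℝ → ℝ)
    (hg : ∀ s : ℝ, s ≠ 0 →
      g s = (A + B * Real.sin (ω * Real.log |s|) + E) * |s| ^ (pstar - 2) * s)
    (hg0 : g 0 = 0)
    (hG : ∀ s : ℝ, G s = ∫ t in (0 : ℝ)..s, g t) :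
    (∀ (j : ℤ) (s : ℝ),
      G s = γ ^ (-(N : ℝ) * (j : ℝ)) * G (γ ^ (((N : ℝ) - 2) / 2 * (j : ℝ)) * s)) ∧
    (∀ s : ℝ, s ≠ 0 → 0 < g s * s) ∧
    (∀ s : ℝ, (A - B + E) / pstar * |s| ^ pstar ≤ G s) := by
  have hN3 : (3 : ℝ) ≤ (N : ℝ) := by exact_mod_cast hN
  have hN2 : (0 : ℝ) < (N : ℝ) - 2 := by linarith
  have hp2 : 2 < pstar := by
    rw [hps, lt_div_iff₀ hN2]; nlinarith
  have hp0 : 0 < pstar := by linarith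
  have hγpos : 0 < γ := by rw [hγ]; exact Real.exp_pos _
  -- bounds on the oscillatory coefficient
  have hθlow : ∀ t : ℝ, A - B + E ≤ A + B * Real.sin (ω * Real.log |t|) + E := by
    intro t
    nlinarith [Real.neg_one_le_sin (ω * Real.log |t|)]
  have hθhigh : ∀ t : ℝ, A + B * Real.sin (ω * Real.log |t|) + E ≤ A + B + E := by
    intro t
    nlinarith [Real.sin_le_one (ω * Real.log |t|)]
  have hθpos : ∀ t : ℝ, 0 < A + B * Real.sin (ω * Real.log |t|) + E := by
    intro t; have := hθlow t; linarith
  -- oddness of g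
  have hodd : ∀ x : ℝ, g (-x) = - g x := by
    intro x
    rcases eq_or_ne x 0 with rfl | hx
    · simp [hg0]
    · rw [hg _ (neg_ne_zero.mpr hx), hg _ hx, abs_neg]; ring
  -- pointwise bound |g t| ≤ (A+B+E) |t|^(pstar-1)
  have hbound : ∀ t : ℝ, |g t| ≤ (A + B + E) * |t| ^ (pstar - 1) := by
    intro t
    rcases eq_or_ne t 0 with rfl | ht
    · simp only [hg0, abs_zero]
      rw [Real.zero_rpow (by linarith : pstar - 1 ≠ 0)]
      simp
    · rw [hg _ ht, abs_mul, abs_mul]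
      have h1 : |A + B * Real.sin (ω * Real.log |t|) + E| ≤ A + B + E := by
        rw [abs_of_pos (hθpos t)]; exact hθhigh t
      have h2 : abs (|t| ^ (pstar - 2)) = |t| ^ (pstar - 2) :=
        abs_of_nonneg (Real.rpow_nonneg (abs_nonneg t) _)
      rw [h2]
      have h3 : |t| ^ (pstar - 2) * |t| = |t| ^ (pstar - 1) := by
        rw [show pstar - 1 = pstar - 2 + 1 by ring, Real.rpow_add_one (abs_ne_zero.mpr ht)]
      calc |A + B * Real.sin (ω * Real.log |t|) + E| * |t| ^ (pstar - 2) * |t|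
          ≤ (A + B + E) * |t| ^ (pstar - 2) * |t| := by
            apply mul_le_mul_of_nonneg_right _ (abs_nonneg t)
            exact mul_le_mul_of_nonneg_right h1 (Real.rpow_nonneg (abs_nonneg t) _)
        _ = (A + B + E) * |t| ^ (pstar - 1) := by rw [mul_assoc, h3]
  -- continuity of g
  have hcont : Continuous g := by
    rw [continuous_iff_continuousAt]
    intro x
    rcases eq_or_ne x 0 with rfl | hx
    · unfold ContinuousAt
      rw [hg0]
      apply squeeze_zero_norm hbound
      have hc : Continuous fun t : ℝ => (A + B + E) * |t| ^ (pstar - 1) :=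
        continuous_const.mul (continuous_abs.rpow_const (fun y => Or.inr (by linarith)))
      have h := hc.continuousAt (x := (0 : ℝ))
      unfold ContinuousAt at h
      simpa [Real.zero_rpow (by linarith : pstar - 1 ≠ 0)] using h
    · have hF : ContinuousAt
        (fun s : ℝ => (A + B * Real.sin (ω * Real.log |s|) + E) * |s| ^ (pstar - 2) * s) x := by
        have hlog : ContinuousAt (fun s : ℝ => Real.log |s|) x :=
          (Real.continuousAt_log (abs_ne_zero.mpr hx)).comp continuous_abs.continuousAt
        have h1 : ContinuousAt (fun s : ℝ => A + B * Real.sin (ω * Real.log |s|) + E) x :=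
          ((continuousAt_const.add (continuousAt_const.mul
            ((Real.continuous_sin.continuousAt).comp (continuousAt_const.mul hlog)))).add
            continuousAt_const)
        have h2 : ContinuousAt (fun s : ℝ => |s| ^ (pstar - 2)) x :=
          (continuous_abs.rpow_const (fun y => Or.inr (by linarith))).continuousAt
        exact (h1.mul h2).mul continuousAt_id
      apply hF.congr
      filter_upwards [isOpen_compl_singleton.mem_nhds
        (by simpa using hx : x ∈ ({0}ᶜ : Set ℝ))] with y hy
      exact (hg y hy).symm
  -- Part 2
  have part2 : ∀ s : ℝ, s ≠ 0 → 0 < g s * s := by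
    intro s hs
    rw [hg s hs]
    have h1 : 0 < |s| ^ (pstar - 2) := Real.rpow_pos_of_pos (abs_pos.mpr hs) _
    have h2 : 0 < s * s := mul_self_pos.mpr hs
    have h3 : (A + B * Real.sin (ω * Real.log |s|) + E) * |s| ^ (pstar - 2) * s * s
        = (A + B * Real.sin (ω * Real.log |s|) + E) * |s| ^ (pstar - 2) * (s * s) := by ring
    rw [h3]
    exact mul_pos (mul_pos (hθpos s) h1) h2
  -- Part 1
  have part1 : ∀ (j : ℤ) (s : ℝ),
      G s = γ ^ (-(N : ℝ) * (j : ℝ)) * G (γ ^ (((N : ℝ) - 2) / 2 * (j : ℝ)) * s) := by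
    intro j s
    set c : ℝ := ((N : ℝ) - 2) / 2 * (j : ℝ) with hc
    set lam : ℝ := γ ^ c with hlamdef
    have hlam : 0 < lam := Real.rpow_pos_of_pos hγpos c
    have hωlog : ω * Real.log lam = (j : ℝ) * (2 * π) := by
      rw [hlamdef, Real.log_rpow hγpos, hγ, Real.log_exp, hc]
      field_simp
      ring
    have hkey : ∀ x : ℝ, g (lam * x) = lam ^ (pstar - 1) * g x := by
      intro x
      rcases eq_or_ne x 0 with rfl | hx
      · simp [hg0]
      · have hlx : lam * x ≠ 0 := mul_ne_zero (ne_of_gt hlam) hx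
        rw [hg _ hlx, hg _ hx]
        have habs : |lam * x| = lam * |x| := by rw [abs_mul, abs_of_pos hlam]
        rw [habs, Real.log_mul (ne_of_gt hlam) (abs_ne_zero.mpr hx), mul_add, hωlog,
          add_comm ((j : ℝ) * (2 * π)) (ω * Real.log |x|), Real.sin_add_int_mul_two_pi,
          Real.mul_rpow hlam.le (abs_nonneg x)]
        have hll : lam ^ (pstar - 1) = lam ^ (pstar - 2) * lam := by
          rw [show pstar - 1 = pstar - 2 + 1 by ring, Real.rpow_add_one (ne_of_gt hlam)]
        rw [hll]; ring
    have hGscale : G (lam * s) = lam ^ pstar * G s := by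
      have h1 : lam • ∫ x in (0 : ℝ)..s, g (lam * x) = ∫ x in (lam * 0)..(lam * s), g x :=
        intervalIntegral.smul_integral_comp_mul_left g lam
      simp only [mul_zero, smul_eq_mul] at h1
      have h2 : (∫ x in (0 : ℝ)..s, g (lam * x))
          = lam ^ (pstar - 1) * ∫ x in (0 : ℝ)..s, g x := by
        simp only [hkey]
        exact intervalIntegral.integral_const_mul _ _
      rw [hG (lam * s), ← h1, h2, hG s,
        show pstar = 1 + (pstar - 1) by ring, Real.rpow_add hlam, Real.rpow_one]
      ring
    rw [hGscale]
    have hlp : lam ^ pstar = γ ^ ((N : ℝ) * (j : ℝ)) := by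
      rw [hlamdef, ← Real.rpow_mul hγpos.le]
      congr 1
      rw [hc, hps]
      field_simp
    rw [hlp, ← mul_assoc, ← Real.rpow_add hγpos,
      show -(N : ℝ) * (j : ℝ) + (N : ℝ) * (j : ℝ) = 0 by ring, Real.rpow_zero, one_mul]
  -- evenness of G
  have heven : ∀ s : ℝ, G (-s) = G s := by
    intro s
    have h1 : ∫ x in (0 : ℝ)..s, g (-x) = ∫ x in -s..(-(0 : ℝ)), g x :=
      intervalIntegral.integral_comp_neg g
    simp only [neg_zero] at h1
    have h2 : (∫ x in (0 : ℝ)..s, g (-x)) = - ∫ x in (0 : ℝ)..s, g x := by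
      simp only [hodd]
      exact intervalIntegral.integral_neg
    have h3 : (∫ x in (-s)..(0 : ℝ), g x) = - ∫ x in (0 : ℝ)..(-s), g x :=
      intervalIntegral.integral_symm 0 (-s)
    rw [hG (-s), hG s]
    have := h1.symm.trans h2
    rw [h3] at this
    linarith
  -- Part 3 for nonneg s
  have hmain : ∀ s : ℝ, 0 ≤ s → (A - B + E) / pstar * s ^ pstar ≤ G s := by
    intro s hs
    rw [hG s]
    have hFcont : Continuous (fun t : ℝ => (A - B + E) * (|t| ^ (pstar - 2) * t)) :=
      continuous_const.mul
        ((continuous_abs.rpow_const (fun y => Or.inr (by linarith))).mul continuous_id)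
    have hFint : IntervalIntegrable (fun t : ℝ => (A - B + E) * (|t| ^ (pstar - 2) * t))
        volume 0 s := hFcont.intervalIntegrable 0 s
    have hgint : IntervalIntegrable g volume 0 s := hcont.intervalIntegrable 0 s
    have hmono : (∫ t in (0 : ℝ)..s, (A - B + E) * (|t| ^ (pstar - 2) * t))
        ≤ ∫ t in (0 : ℝ)..s, g t := by
      apply intervalIntegral.integral_mono_on hs hFint hgint
      intro t ht
      rcases eq_or_ne t 0 with rfl | ht0
      · simp [hg0]
      · rw [hg t ht0]
        have htpos : 0 ≤ t := ht.1
        have hle : A - B + E ≤ A + B * Real.sin (ω * Real.log |t|) + E := hθlow t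
        have hnn : 0 ≤ |t| ^ (pstar - 2) * t :=
          mul_nonneg (Real.rpow_nonneg (abs_nonneg t) _) htpos
        calc (A - B + E) * (|t| ^ (pstar - 2) * t)
            ≤ (A + B * Real.sin (ω * Real.log |t|) + E) * (|t| ^ (pstar - 2) * t) :=
              mul_le_mul_of_nonneg_right hle hnn
          _ = (A + B * Real.sin (ω * Real.log |t|) + E) * |t| ^ (pstar - 2) * t := by ring
    have hcomp : (∫ t in (0 : ℝ)..s, (A - B + E) * (|t| ^ (pstar - 2) * t))
        = (A - B + E) / pstar * s ^ pstar := by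
      rw [intervalIntegral.integral_const_mul]
      have hcong : (∫ t in (0 : ℝ)..s, |t| ^ (pstar - 2) * t)
          = ∫ t in (0 : ℝ)..s, t ^ (pstar - 1) := by
        apply intervalIntegral.integral_congr
        intro t ht
        rw [Set.uIcc_of_le hs] at ht
        have ht0 : 0 ≤ t := ht.1
        simp only []
        rw [abs_of_nonneg ht0]
        rcases eq_or_ne t 0 with rfl | htne
        · rw [Real.zero_rpow (by linarith : pstar - 2 ≠ 0),
            Real.zero_rpow (by linarith : pstar - 1 ≠ 0)]
          ring
        · rw [show pstar - 1 = pstar - 2 + 1 by ring, Real.rpow_add_one htne]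
      rw [hcong, integral_rpow (Or.inl (by linarith : (-1 : ℝ) < pstar - 1)),
        show pstar - 1 + 1 = pstar by ring, Real.zero_rpow (ne_of_gt hp0)]
      ring
    linarith [hmono, hcomp.symm.le, hcomp.le]
  refine ⟨part1, part2, ?_⟩
  intro s
  rcases le_or_gt 0 s with hs | hs
  · rw [abs_of_nonneg hs]
    exact hmain s hs
  · have h := hmain (-s) (by linarith)
    rw [heven s] at h
    rwa [abs_of_neg hs]
end
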